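/- Fix \alpha \in (0,1] and a real x > 0, and for each n let m(n) = \lfloor \alpha n \rfloor. With r_1, r_2, r_3, r_{12} formed from a_n(x), b_n(x), c_n(x) and a_{m(n)}(x), b_{m(n)}(x), c_{m(n)}(x), one has (r_1^2 + r_2^2 - 2 r_{12}^2) / (x \, r_3^2 \sqrt{(r_1+r_2)^2 - 4 r_{12}^2}) \to \sqrt{x+1}/2 as n \to \infty. -/

import Mathlib

open Filter

/-- `aa k x = ∑_{j=0}^k x^j / j!` -/
noncomputable def aa (k : ℕ) (x : ℝ) : ℝ := ∑ j ∈ Finset.range (k + 1), x ^ j / (Nat.factorial j)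

/-- `bb k x = ∑_{j=1}^k j x^j / j!` -/
noncomputable def bb (k : ℕ) (x : ℝ) : ℝ := ∑ j ∈ Finset.Icc 1 k, (j : ℝ) * x ^ j / (Nat.factorial j)

/-- `cc k x = ∑_{j=1}^k j² x^j / j!` -/
noncomputable def cc (k : ℕ) (x : ℝ) : ℝ := ∑ j ∈ Finset.Icc 1 k, (j : ℝ) ^ 2 * x ^ j / (Nat.factorial j)

noncomputable def r3 (n m : ℕ) (x : ℝ) : ℝ := aa n x + aa m x
noncomputable def r12 (n m : ℕ) (x : ℝ) : ℝ := bb n x * bb m x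
noncomputable def r1 (n m : ℕ) (x : ℝ) : ℝ := r3 n m x * cc n x - (bb n x) ^ 2
noncomputable def r2 (n m : ℕ) (x : ℝ) : ℝ := r3 n m x * cc m x - (bb m x) ^ 2

/-- The first-intensity (Kac–Rice) integrand of a Weyl random harmonic polynomial of
bidegree `(n, m)`, evaluated at `z`, with `x = |z|²`. -/
noncomputable def F (n m : ℕ) (z : ℂ) : ℝ :=
  (1 / ‖z‖ ^ 2) *
    (((r1 n m (‖z‖ ^ 2)) ^ 2 + (r2 n m (‖z‖ ^ 2)) ^ 2 - 2 * (r12 n m (‖z‖ ^ 2)) ^ 2) /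
      ((r3 n m (‖z‖ ^ 2)) ^ 2 *
        Real.sqrt ((r1 n m (‖z‖ ^ 2) + r2 n m (‖z‖ ^ 2)) ^ 2 - 4 * (r12 n m (‖z‖ ^ 2)) ^ 2)))

/-- The expected number of zeros in `ℂ`, as given by the Kac–Rice formula. -/
noncomputable def I (n m : ℕ) : ℝ := (1 / Real.pi) * ∫ z : ℂ, F n m z

private lemma hasSum_exp' (x : ℝ) : HasSum (fun j : ℕ => x ^ j / (Nat.factorial j)) (Real.exp x) := by
  rw [Real.exp_eq_exp_ℝ]; exact NormedSpace.expSeries_div_hasSum_exp x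

private lemma range_succ_eq_insert (k : ℕ) : Finset.range (k+1) = insert 0 (Finset.Icc 1 k) := by
  ext j; simp; omega

private lemma T_succ (k : ℕ) (x : ℝ) :
    (∑ j ∈ Finset.range (k+1), (j : ℝ) * x ^ j / (Nat.factorial j))
      = x * ∑ i ∈ Finset.range k, x ^ i / (Nat.factorial i) := by
  rw [Finset.sum_range_succ', Finset.mul_sum]
  simp only [Nat.cast_zero, zero_mul, pow_zero, Nat.factorial_zero, zero_div, add_zero]
  apply Finset.sum_congr rfl
  intro i _
  have hf : ((Nat.factorial i : ℝ)) ≠ 0 := Nat.cast_ne_zero.2 (Nat.factorial_ne_zero i)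
  have h : ((Nat.factorial (i+1) : ℝ)) = (i+1) * (Nat.factorial i) := by
    push_cast [Nat.factorial_succ]; ring
  rw [h]; push_cast; field_simp; ring

private lemma bb_eq (k : ℕ) (x : ℝ) :
    bb k x = x * ∑ i ∈ Finset.range k, x ^ i / (Nat.factorial i) := by
  rw [← T_succ k x, bb, range_succ_eq_insert, Finset.sum_insert (by simp)]; simp

private lemma cc_eq (k : ℕ) (x : ℝ) :
    cc k x = x * ∑ i ∈ Finset.range k, ((i : ℝ) + 1) * x ^ i / (Nat.factorial i) := by
  have h1 : (∑ j ∈ Finset.range (k+1), (j : ℝ) ^ 2 * x ^ j / (Nat.factorial j)) = cc k x := by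
    rw [cc, range_succ_eq_insert, Finset.sum_insert (by simp)]; simp
  rw [← h1, Finset.sum_range_succ', Finset.mul_sum]
  simp only [Nat.cast_zero, zero_pow, pow_zero, Nat.factorial_zero, zero_div, add_zero,
    ne_eq, OfNat.ofNat_ne_zero, not_false_eq_true, zero_mul]
  apply Finset.sum_congr rfl
  intro i _
  have hf : ((Nat.factorial i : ℝ)) ≠ 0 := Nat.cast_ne_zero.2 (Nat.factorial_ne_zero i)
  have h : ((Nat.factorial (i+1) : ℝ)) = (i+1) * (Nat.factorial i) := by
    push_cast [Nat.factorial_succ]; ring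
  rw [h]; push_cast; field_simp; ring


/-- For fixed `x > 0`, `α ∈ (0,1]` and `m(n) = ⌊α n⌋`, the first intensity expression
converges pointwise to `√(x+1)/2` as `n → ∞`. -/
theorem weyl_pointwise_fixed_x (α x : ℝ) (hα0 : 0 < α) (hα1 : α ≤ 1) (hx : 0 < x) :
    Tendsto
      (fun n : ℕ =>
        ((r1 n ⌊α * n⌋₊ x) ^ 2 + (r2 n ⌊α * n⌋₊ x) ^ 2 - 2 * (r12 n ⌊α * n⌋₊ x) ^ 2) /
          (x * (r3 n ⌊α * n⌋₊ x) ^ 2 *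
            Real.sqrt ((r1 n ⌊α * n⌋₊ x + r2 n ⌊α * n⌋₊ x) ^ 2 - 4 * (r12 n ⌊α * n⌋₊ x) ^ 2)))
      atTop (nhds (Real.sqrt (x + 1) / 2)) := by
  set E := Real.exp x with hEdef
  have hE : 0 < E := Real.exp_pos x
  set S : ℕ → ℝ := fun k => ∑ i ∈ Finset.range k, x ^ i / (Nat.factorial i) with hSdef
  have hS : Tendsto S atTop (nhds E) := (hasSum_exp' x).tendsto_sum_nat
  -- tendsto of T k = ∑ i ∈ range k, i * x^i / i!
  have hT : Tendsto (fun k => ∑ i ∈ Finset.range k, (i : ℝ) * x ^ i / (Nat.factorial i))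
      atTop (nhds (x * E)) := by
    rw [← tendsto_add_atTop_iff_nat 1]
    simp only [T_succ]
    exact hS.const_mul x
  have hA : Tendsto (fun k => aa k x) atTop (nhds E) := by
    have := (tendsto_add_atTop_iff_nat 1).2 hS
    exact this
  have hB : Tendsto (fun k => bb k x) atTop (nhds (x * E)) := by
    simp only [bb_eq]
    exact hS.const_mul x
  have hC : Tendsto (fun k => cc k x) atTop (nhds (x * (x * E + E))) := by
    simp only [cc_eq]
    have h2 : ∀ k, (∑ i ∈ Finset.range k, ((i : ℝ) + 1) * x ^ i / (Nat.factorial i))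
        = (∑ i ∈ Finset.range k, (i : ℝ) * x ^ i / (Nat.factorial i)) + S k := by
      intro k
      rw [← Finset.sum_add_distrib]
      apply Finset.sum_congr rfl
      intro i _
      ring
    simp only [h2]
    exact (hT.add hS).const_mul x
  have hm : Tendsto (fun n : ℕ => ⌊α * (n : ℝ)⌋₊) atTop atTop :=
    tendsto_nat_floor_atTop.comp (Tendsto.const_mul_atTop hα0 tendsto_natCast_atTop_atTop)
  have hAm : Tendsto (fun n : ℕ => aa ⌊α * (n : ℝ)⌋₊ x) atTop (nhds E) := hA.comp hm
  have hBm : Tendsto (fun n : ℕ => bb ⌊α * (n : ℝ)⌋₊ x) atTop (nhds (x * E)) := hB.comp hm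
  have hCm : Tendsto (fun n : ℕ => cc ⌊α * (n : ℝ)⌋₊ x) atTop (nhds (x * (x * E + E))) := hC.comp hm
  set V1 : ℝ := (E + E) * (x * (x * E + E)) - (x * E) ^ 2 with hV1
  set V12 : ℝ := (x * E) * (x * E) with hV12
  have hr3 : Tendsto (fun n : ℕ => r3 n ⌊α * (n : ℝ)⌋₊ x) atTop (nhds (E + E)) := by
    simp only [r3]; exact hA.add hAm
  have hr1 : Tendsto (fun n : ℕ => r1 n ⌊α * (n : ℝ)⌋₊ x) atTop (nhds V1) := by
    simp only [r1, r3]; exact ((hA.add hAm).mul hC).sub (hB.pow 2)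
  have hr2 : Tendsto (fun n : ℕ => r2 n ⌊α * (n : ℝ)⌋₊ x) atTop (nhds V1) := by
    simp only [r2, r3]; exact ((hA.add hAm).mul hCm).sub (hBm.pow 2)
  have hr12 : Tendsto (fun n : ℕ => r12 n ⌊α * (n : ℝ)⌋₊ x) atTop (nhds V12) := by
    simp only [r12]; exact hB.mul hBm
  set W : ℝ := (V1 + V1) ^ 2 - 4 * V12 ^ 2 with hWdef
  have hWval : W = (4 * x * E ^ 2) ^ 2 * (x + 1) := by
    rw [hWdef, hV1, hV12]; ring
  have hsqrtW : Real.sqrt W = 4 * x * E ^ 2 * Real.sqrt (x + 1) := by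
    rw [hWval, Real.sqrt_mul (sq_nonneg _), Real.sqrt_sq (by positivity)]
  have hnum : Tendsto
      (fun n : ℕ => (r1 n ⌊α * (n : ℝ)⌋₊ x) ^ 2 + (r2 n ⌊α * (n : ℝ)⌋₊ x) ^ 2
        - 2 * (r12 n ⌊α * (n : ℝ)⌋₊ x) ^ 2)
      atTop (nhds (V1 ^ 2 + V1 ^ 2 - 2 * V12 ^ 2)) :=
    ((hr1.pow 2).add (hr2.pow 2)).sub ((hr12.pow 2).const_mul 2)
  have hden : Tendsto
      (fun n : ℕ => x * (r3 n ⌊α * (n : ℝ)⌋₊ x) ^ 2 *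
        Real.sqrt ((r1 n ⌊α * (n : ℝ)⌋₊ x + r2 n ⌊α * (n : ℝ)⌋₊ x) ^ 2
          - 4 * (r12 n ⌊α * (n : ℝ)⌋₊ x) ^ 2))
      atTop (nhds (x * (E + E) ^ 2 * Real.sqrt W)) := by
    refine Tendsto.mul ((hr3.pow 2).const_mul x) ?_
    exact (Real.continuous_sqrt.tendsto W).comp
      (((hr1.add hr2).pow 2).sub ((hr12.pow 2).const_mul 4))
  have hdenne : x * (E + E) ^ 2 * Real.sqrt W ≠ 0 := by
    rw [hsqrtW]; positivity
  have hlim := hnum.div hden hdenne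
  have hs2 : Real.sqrt (x + 1) ^ 2 = x + 1 := Real.sq_sqrt (by linarith)
  have hspos : 0 < Real.sqrt (x + 1) := Real.sqrt_pos.2 (by linarith)
  have hval : (V1 ^ 2 + V1 ^ 2 - 2 * V12 ^ 2) / (x * (E + E) ^ 2 * Real.sqrt W)
      = Real.sqrt (x + 1) / 2 := by
    rw [hsqrtW, hV1, hV12, div_eq_div_iff (by positivity) two_ne_zero]
    nlinarith [hs2, sq_nonneg E, hE, hx, hspos]
  rw [← hval]
  exact hlim
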